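/- Let A be a real d×n matrix of rank d with Plücker coordinates x_I = det(A_I) for d-subsets I, and let P = Aᵀ(AAᵀ)⁻¹A. Then for each i, the diagonal entry p_ii equals (∑_{I ∋ i} x_I²)/(∑_I x_I²), where the numerator sum ranges over d-subsets I containing i. -/

import Mathlib

open Matrix

lemma cb_image {d n : ℕ} (I : {s : Finset (Fin n) // s.card = d}) (σ : Equiv.Perm (Fin d)) :
    Finset.image (I.1.orderEmbOfFin I.2 ∘ σ) Finset.univ = I.1 := by
  have := Finset.range_orderEmbOfFin I.1 I.2
  rw [← Finset.coe_inj, Finset.coe_image, Finset.coe_univ, Set.image_univ,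
    Set.range_comp, Equiv.range_eq_univ, Set.image_univ, this]

lemma cb_bij {d n : ℕ} (T : (Fin d → Fin n) → ℝ)
    (h0 : ∀ f : Fin d → Fin n, ¬ Function.Injective f → T f = 0) :
    ∑ f : Fin d → Fin n, T f
      = ∑ p : {s : Finset (Fin n) // s.card = d} × Equiv.Perm (Fin d),
          T (p.1.1.orderEmbOfFin p.1.2 ∘ p.2) := by
  classical
  rw [← Finset.sum_filter_of_ne (s := Finset.univ) (p := fun f => Function.Injective f)
    (by intro f _ hT; by_contra hf; exact hT (h0 f hf))]
  refine (Finset.sum_bij (fun p _ => p.1.1.orderEmbOfFin p.1.2 ∘ p.2) ?_ ?_ ?_ ?_).symm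
  · intro p _
    simp only [Finset.mem_filter, Finset.mem_univ, true_and]
    exact (p.1.1.orderEmbOfFin p.1.2).injective.comp p.2.injective
  · rintro ⟨I1, σ1⟩ h1 ⟨I2, σ2⟩ h2 h
    simp only at h
    have himg : I1 = I2 := Subtype.ext (by rw [← cb_image I1 σ1, ← cb_image I2 σ2, h])
    subst himg
    refine Prod.ext rfl (Equiv.ext fun k => ?_)
    have := congrFun h k
    simp only [Function.comp_apply] at this
    exact (I1.1.orderEmbOfFin I1.2).injective this
  · intro f hf
    simp only [Finset.mem_filter, Finset.mem_univ, true_and] at hf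
    set s : Finset (Fin n) := Finset.image f Finset.univ with hs
    have hcard : s.card = d := by
      rw [hs, Finset.card_image_of_injective _ hf, Finset.card_univ, Fintype.card_fin]
    have hmem : ∀ k, f k ∈ s := fun k => Finset.mem_image_of_mem f (Finset.mem_univ k)
    set σ0 : Fin d → Fin d := fun k => (s.orderIsoOfFin hcard).symm ⟨f k, hmem k⟩ with hσ0
    have hσ0inj : Function.Injective σ0 := by
      intro a b hab
      apply hf
      have := congrArg (fun x => ((s.orderIsoOfFin hcard) x : Fin n)) hab
      simpa [hσ0] using this
    refine ⟨⟨⟨s, hcard⟩, Equiv.ofBijective σ0 (Finite.injective_iff_bijective.mp hσ0inj)⟩,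
      Finset.mem_univ _, ?_⟩
    simp only
    funext k
    show s.orderEmbOfFin hcard (σ0 k) = f k
    rw [← Finset.coe_orderIsoOfFin_apply, hσ0]
    simp
  · intro p _; rfl

lemma cauchyBinet {d n : ℕ} (A : Matrix (Fin d) (Fin n) ℝ) (B : Matrix (Fin n) (Fin d) ℝ) :
    (A * B).det = ∑ I : {s : Finset (Fin n) // s.card = d},
      (A.submatrix id (I.1.orderEmbOfFin I.2)).det * (B.submatrix (I.1.orderEmbOfFin I.2) id).det := by
  classical
  have h1 : (A * B).det = ∑ f : Fin d → Fin n, (∏ k, A k (f k)) * (B.submatrix f id).det := by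
    have h : (A * B) = fun k => ∑ j, A k j • B j := by
      funext k l
      simp [Matrix.mul_apply, Finset.sum_apply]
    have e1 : (A * B).det
        = (Matrix.detRowAlternating (R := ℝ) (n := Fin d)).toMultilinearMap
            (fun k => ∑ j, A k j • B j) := by
      rw [show (A*B).det = Matrix.detRowAlternating (A*B) from rfl, h]; rfl
    rw [e1, MultilinearMap.map_sum]
    refine Finset.sum_congr rfl fun f _ => ?_
    rw [(Matrix.detRowAlternating (R := ℝ) (n := Fin d)).toMultilinearMap.map_smul_univ,
      smul_eq_mul]
    rfl
  rw [h1, cb_bij _ (fun f hf => by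
    obtain ⟨a, b, hab, hne⟩ := Function.not_injective_iff.mp hf
    have : (B.submatrix f id).det = 0 :=
      Matrix.det_zero_of_row_eq hne (by funext l; simp [hab])
    rw [this, mul_zero])]
  rw [Fintype.sum_prod_type]
  refine Finset.sum_congr rfl fun I _ => ?_
  have hperm : ∀ σ : Equiv.Perm (Fin d),
      (B.submatrix (I.1.orderEmbOfFin I.2 ∘ σ) id).det
        = (Equiv.Perm.sign σ : ℝ) * (B.submatrix (I.1.orderEmbOfFin I.2) id).det := by
    intro σ
    have : B.submatrix (I.1.orderEmbOfFin I.2 ∘ σ) id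
        = (B.submatrix (I.1.orderEmbOfFin I.2) id).submatrix σ id := rfl
    rw [this, Matrix.det_permute]
  calc ∑ σ : Equiv.Perm (Fin d), (∏ k, A k ((I.1.orderEmbOfFin I.2) (σ k))) *
        (B.submatrix (I.1.orderEmbOfFin I.2 ∘ σ) id).det
      = (∑ σ : Equiv.Perm (Fin d), (Equiv.Perm.sign σ : ℝ) *
          ∏ k, (A.submatrix id (I.1.orderEmbOfFin I.2))ᵀ (σ k) k) *
          (B.submatrix (I.1.orderEmbOfFin I.2) id).det := by
        rw [Finset.sum_mul]
        refine Finset.sum_congr rfl fun σ _ => ?_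
        rw [hperm σ]
        simp [Matrix.transpose_apply, Matrix.submatrix_apply]
        ring
    _ = _ := by
        rw [← Matrix.det_apply', Matrix.det_transpose]

lemma det_ne_zero_of_rank_eq {d : ℕ} (M : Matrix (Fin d) (Fin d) ℝ) (h : M.rank = d) :
    M.det ≠ 0 := by
  intro hdet
  obtain ⟨v, hv0, hMv⟩ := (Matrix.exists_mulVec_eq_zero_iff).mpr hdet
  have hv : v ∈ LinearMap.ker (M.mulVecLin) := by
    simpa [Matrix.mulVecLin_apply] using hMv
  have hrn := LinearMap.finrank_range_add_finrank_ker (M.mulVecLin)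
  have hfr : Module.finrank ℝ (Fin d → ℝ) = d := by simp
  rw [hfr] at hrn
  have hker : Module.finrank ℝ (LinearMap.ker M.mulVecLin) = 0 := by
    have : Matrix.rank M = Module.finrank ℝ (LinearMap.range M.mulVecLin) := rfl
    omega
  rw [Submodule.finrank_eq_zero] at hker
  rw [hker, Submodule.mem_bot] at hv
  exact hv0 hv

theorem stmt_19 (d n : ℕ) (A : Matrix (Fin d) (Fin n) ℝ) (hA : A.rank = d)
    (P : Matrix (Fin n) (Fin n) ℝ) (hP : P = Aᵀ * (A * Aᵀ)⁻¹ * A) (i : Fin n) :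
    P i i =
      (∑ I : {s : Finset (Fin n) // s.card = d ∧ i ∈ s},
          ((A.submatrix id (I.1.orderEmbOfFin I.2.1)).det) ^ 2) /
      (∑ I : {s : Finset (Fin n) // s.card = d},
          ((A.submatrix id (I.1.orderEmbOfFin I.2)).det) ^ 2) := by
  classical
  set M : Matrix (Fin d) (Fin d) ℝ := A * Aᵀ with hM
  set G : Finset (Fin n) → ℝ := fun s =>
    if h : s.card = d then ((A.submatrix id (s.orderEmbOfFin h)).det) ^ 2 else 0 with hG
  have hGval : ∀ (s : Finset (Fin n)) (h : s.card = d),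
      G s = ((A.submatrix id (s.orderEmbOfFin h)).det) ^ 2 := by
    intro s h; rw [hG]; simp only [dif_pos h]
  set S : ℝ := ∑ I : {s : Finset (Fin n) // s.card = d},
      ((A.submatrix id (I.1.orderEmbOfFin I.2)).det) ^ 2 with hSdef
  set N : ℝ := ∑ I : {s : Finset (Fin n) // s.card = d ∧ i ∈ s},
      ((A.submatrix id (I.1.orderEmbOfFin I.2.1)).det) ^ 2 with hNdef
  have hSG : S = ∑ I : {s : Finset (Fin n) // s.card = d}, G I.1 :=
    Finset.sum_congr rfl fun I _ => (hGval I.1 I.2).symm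
  have hNG : N = ∑ I : {s : Finset (Fin n) // s.card = d ∧ i ∈ s}, G I.1 :=
    Finset.sum_congr rfl fun I _ => (hGval I.1 I.2.1).symm
  -- denominator = det M
  have hdetM : M.det = S := by
    rw [hM, cauchyBinet]
    refine Finset.sum_congr rfl fun I _ => ?_
    rw [show Aᵀ.submatrix (I.1.orderEmbOfFin I.2) id = (A.submatrix id (I.1.orderEmbOfFin I.2))ᵀ
      from rfl, Matrix.det_transpose, sq]
  have hrankM : M.rank = d := by rw [hM, Matrix.rank_self_mul_transpose, hA]
  have hS0 : M.det ≠ 0 := det_ne_zero_of_rank_eq M hrankM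
  have hSne : S ≠ 0 := hdetM ▸ hS0
  -- weighted matrix
  set w : Fin n → ℝ := fun j => if j = i then 2 else 1 with hw
  set D : Matrix (Fin n) (Fin n) ℝ := Matrix.diagonal w with hD
  have hADA : (A * (D * Aᵀ)).det = S + N := by
    rw [cauchyBinet]
    have hterm : ∀ I : {s : Finset (Fin n) // s.card = d},
        (A.submatrix id (I.1.orderEmbOfFin I.2)).det *
          ((D * Aᵀ).submatrix (I.1.orderEmbOfFin I.2) id).det
        = G I.1 + (if i ∈ I.1 then G I.1 else 0) := by
      intro I
      have hsub : (D * Aᵀ).submatrix (I.1.orderEmbOfFin I.2) id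
          = Matrix.diagonal (w ∘ (I.1.orderEmbOfFin I.2)) *
            (A.submatrix id (I.1.orderEmbOfFin I.2))ᵀ := by
        funext k l
        simp [hD, Matrix.mul_apply, Matrix.diagonal_apply, Function.comp]
      have himg : Finset.image (I.1.orderEmbOfFin I.2) Finset.univ = I.1 := by
        simpa using cb_image I (Equiv.refl (Fin d))
      have hprod : ∏ k, w ((I.1.orderEmbOfFin I.2) k) = (if i ∈ I.1 then 2 else 1) := by
        have hpi := Finset.prod_image (s := Finset.univ) (f := w) (g := (I.1.orderEmbOfFin I.2))
          (fun a _ b _ h => (I.1.orderEmbOfFin I.2).injective h)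
        rw [himg] at hpi
        rw [← hpi, hw]
        simp [Finset.prod_ite_eq']
      rw [hsub, Matrix.det_mul, Matrix.det_transpose, Matrix.det_diagonal]
      rw [show ∏ k, (w ∘ (I.1.orderEmbOfFin I.2)) k = ∏ k, w ((I.1.orderEmbOfFin I.2) k)
        from rfl, hprod, hGval I.1 I.2, sq]
      split <;> ring
    rw [Finset.sum_congr rfl (fun I _ => hterm I), Finset.sum_add_distrib]
    congr 1
    · rw [hSG]
    · rw [hNG]
      have e1 : ∑ I : {s : Finset (Fin n) // s.card = d}, (if i ∈ I.1 then G I.1 else 0)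
          = ∑ s ∈ Finset.univ.filter (fun s : Finset (Fin n) => s.card = d),
              (if i ∈ s then G s else 0) := by
        rw [Finset.sum_subtype (p := fun s : Finset (Fin n) => s.card = d) _ (by intro x; simp) (fun s => if i ∈ s then G s else 0)]
      have e2 : ∑ I : {s : Finset (Fin n) // s.card = d ∧ i ∈ s}, G I.1
          = ∑ s ∈ Finset.univ.filter (fun s : Finset (Fin n) => s.card = d ∧ i ∈ s), G s := by
        rw [Finset.sum_subtype (p := fun s : Finset (Fin n) => s.card = d ∧ i ∈ s) _ (by intro x; simp) G]
      rw [e1, e2, ← Finset.sum_filter, Finset.filter_filter]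
  -- determinant lemma
  set v : Fin d → ℝ := fun k => A k i with hv
  have hdecomp : A * (D * Aᵀ) = M + Matrix.replicateCol Unit v * Matrix.replicateRow Unit v := by
    funext k l
    have hDA : ∀ j, (D * Aᵀ) j l = w j * A l j := by
      intro j
      simp [hD, Matrix.mul_apply, Matrix.diagonal_apply, Finset.sum_ite_eq]
    have lhs : (A * (D * Aᵀ)) k l = ∑ j, A k j * (w j * A l j) := by
      rw [Matrix.mul_apply]
      exact Finset.sum_congr rfl fun j _ => by rw [hDA j]
    rw [lhs]
    have : ∀ j, A k j * (w j * A l j)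
        = A k j * A l j + (if j = i then A k j * A l j else 0) := by
      intro j; rw [hw]; simp only; split <;> ring
    rw [Finset.sum_congr rfl (fun j _ => this j), Finset.sum_add_distrib,
      Finset.sum_ite_eq' Finset.univ i (fun j => A k j * A l j)]
    simp [hM, Matrix.mul_apply, hv, Matrix.add_apply, mul_comm]
  have hunit : IsUnit M.det := isUnit_iff_ne_zero.mpr hS0
  have hdl := Matrix.det_add_replicateCol_mul_replicateRow (ι := Unit) hunit v v
  rw [← hdecomp, hADA] at hdl
  have hPii : (1 + Matrix.replicateRow Unit v * M⁻¹ * Matrix.replicateCol Unit v).det = 1 + P i i := by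
    rw [Matrix.det_unique, hP]
    simp [Matrix.mul_apply, Matrix.add_apply, hv, hM, Finset.mul_sum, Finset.sum_mul,
      mul_comm, mul_assoc, mul_left_comm]
  rw [hPii, hdetM] at hdl
  field_simp
  linarith [hdl]
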